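/- Suppose the dataset {(x_i, y_i)} satisfies the symmetry condition y_i φ(⟨u_1, x_i⟩) − y_i φ(−⟨u_2, x_i⟩) ≥ 1 for all i, where the dataset contains with every point (x, y) also the point (−x, −y). Then for every i and all Clarke subderivatives h_i ∈ ∂°φ(⟨u_1, x_i⟩) and g_i ∈ ∂°φ(−⟨u_2, x_i⟩), we have y_i (h_i ⟨u_2, x_i⟩ + g_i ⟨u_1, x_i⟩) ≥ 1. -/

import Mathlib

open Finset

/-- Clarke subdifferential of the Leaky ReLU `φ(z) = max{z, αz}`. -/
def clarkeLeaky (α z : ℝ) : Set ℝ :=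
  if 0 < z then {1} else if z < 0 then {α} else Set.Icc α 1

lemma phi_pos' (α z : ℝ) (hα1 : α < 1) (hz : 0 < z) :
    max z (α*z) = z := max_eq_left (by nlinarith)

lemma phi_neg' (α z : ℝ) (hα1 : α < 1) (hz : z < 0) :
    max z (α*z) = α*z := max_eq_right (by nlinarith)

lemma mem_pos' (α z h : ℝ) (hz : 0 < z) (hh : h ∈ clarkeLeaky α z) : h = 1 := by
  simpa [clarkeLeaky, hz] using hh

lemma mem_neg' (α z h : ℝ) (hz : z < 0) (hh : h ∈ clarkeLeaky α z) : h = α := by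
  simpa [clarkeLeaky, hz, not_lt.mpr hz.le] using hh

lemma mem_zero' (α h : ℝ) (hh : h ∈ clarkeLeaky α 0) : α ≤ h ∧ h ≤ 1 := by
  simpa [clarkeLeaky] using hh

lemma key' (α a b h g : ℝ) (hα : 0 < α) (hα1 : α < 1)
    (hh : h ∈ clarkeLeaky α a) (hg : g ∈ clarkeLeaky α (-b))
    (m1 : (1:ℝ) ≤ max a (α*a) - max (-b) (α*(-b)))
    (m2 : (1:ℝ) ≤ max b (α*b) - max (-a) (α*(-a))) :
    (1:ℝ) ≤ h*b + g*a := by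
  rcases lt_trichotomy b 0 with hb | hb | hb
  · have hgb : g = 1 := mem_pos' α (-b) g (by linarith) hg
    rw [phi_pos' α (-b) hα1 (by linarith)] at m1
    have ha : 0 < a := by
      by_contra hc
      push_neg at hc
      have : max a (α*a) ≤ 0 := max_le hc (by nlinarith)
      linarith
    have hha : h = 1 := mem_pos' α a h ha hh
    rw [phi_neg' α b hα1 hb, phi_neg' α (-a) hα1 (by linarith)] at m2
    subst hha hgb
    nlinarith
  · subst hb
    have hg' := mem_zero' α g (by simpa using hg)
    rw [show (-(0:ℝ)) = 0 by ring] at m1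
    simp only [max_self, mul_zero] at m1 m2
    have ha : 0 < a := by
      by_contra hc
      push_neg at hc
      have : max a (α*a) ≤ 0 := max_le hc (by nlinarith)
      linarith
    rw [phi_neg' α (-a) hα1 (by linarith)] at m2
    have hha : h = 1 := mem_pos' α a h ha hh
    have : α * a ≤ g * a := mul_le_mul_of_nonneg_right hg'.1 ha.le
    nlinarith
  · have hgb : g = α := mem_neg' α (-b) g (by linarith) hg
    rw [phi_neg' α (-b) hα1 (by linarith)] at m1
    rw [phi_pos' α b hα1 hb] at m2
    rcases lt_trichotomy a 0 with ha | ha | ha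
    · have hha : h = α := mem_neg' α a h ha hh
      rw [phi_neg' α a hα1 ha] at m1
      subst hha hgb
      nlinarith
    · subst ha
      have hh' := mem_zero' α h (by simpa using hh)
      simp only [max_self, mul_zero, neg_zero] at m1
      have : α * b ≤ h * b := mul_le_mul_of_nonneg_right hh'.1 hb.le
      subst hgb
      nlinarith
    · have hha : h = 1 := mem_pos' α a h ha hh
      rw [phi_neg' α (-a) hα1 (by linarith)] at m2
      subst hha hgb
      nlinarith


/-- On a symmetric dataset, if `y_i (φ(⟨u₁,x_i⟩) − φ(−⟨u₂,x_i⟩)) ≥ 1` for all `i`,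
then for all Clarke subderivatives `h_i ∈ ∂°φ(⟨u₁,x_i⟩)` and `g_i ∈ ∂°φ(−⟨u₂,x_i⟩)`,
`y_i (h_i ⟨u₂,x_i⟩ + g_i ⟨u₁,x_i⟩) ≥ 1`. -/
theorem stmt_7 (d n : ℕ) (α : ℝ) (hα : 0 < α) (hα1 : α < 1)
    (φ : ℝ → ℝ) (hφ : ∀ z, φ z = max z (α * z))
    (x : Fin n → EuclideanSpace ℝ (Fin d)) (y : Fin n → ℝ)
    (hy : ∀ i, y i = 1 ∨ y i = -1)
    (σ : Equiv.Perm (Fin n))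
    (hxσ : ∀ i, x (σ i) = - x i) (hyσ : ∀ i, y (σ i) = - y i)
    (u1 u2 : EuclideanSpace ℝ (Fin d))
    (hmargin : ∀ j, (1 : ℝ) ≤ y j * (φ (inner ℝ u1 (x j)) - φ (-(inner ℝ u2 (x j) : ℝ)))) :
    ∀ i, ∀ h ∈ clarkeLeaky α (inner ℝ u1 (x i)), ∀ g ∈ clarkeLeaky α (-(inner ℝ u2 (x i) : ℝ)),
      (1 : ℝ) ≤ y i * (h * inner ℝ u2 (x i) + g * inner ℝ u1 (x i)) := by
  intro i h hh g hg
  set a : ℝ := inner ℝ u1 (x i) with ha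
  set b : ℝ := inner ℝ u2 (x i) with hb
  have M1 := hmargin i
  have M2 := hmargin (σ i)
  rw [hxσ i, hyσ i, inner_neg_right, inner_neg_right] at M2
  rw [← ha, ← hb] at M1
  rw [← ha, ← hb, neg_neg] at M2
  simp only [hφ] at M1 M2
  rcases hy i with hyi | hyi
  · rw [hyi, one_mul] at M1 ⊢
    rw [hyi] at M2
    exact key' α a b h g hα hα1 hh hg (by linarith) (by linarith)
  · rw [hyi] at M1 M2 ⊢
    have hh' : h ∈ clarkeLeaky α (-(-a)) := by rwa [neg_neg]
    have c := key' α (-b) (-a) g h hα hα1 hg hh'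
      (by rw [neg_neg]; nlinarith) (by rw [neg_neg]; nlinarith)
    nlinarith
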